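/- Given an operator U = {U_1,…,U_k} with U_i ∈ ℝ^{m×n}, there exists a nonnegative matrix A ∈ ℝ^{m×n} with cap(A) ≤ cap(U), Δ(A) ≤ Δ(U), and s(A) = s(U). Moreover, if ∑_i U_i U_i^T = p·I_m then all row sums of A equal p, and if ∑_i U_i^T U_i = q·I_n then all column sums of A equal q. -/

import Mathlib

open Matrix BigOperators

/-- Capacity of a nonnegative matrix. -/
noncomputable def matCap {ι κ : Type*} [Fintype ι] [Fintype κ] (A : Matrix ι κ ℝ) : ℝ :=
  sInf {c : ℝ | ∃ x : κ → ℝ, (∀ j, 0 < x j) ∧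
    c = (Fintype.card ι : ℝ) * (∏ i, A.mulVec x i) ^ ((1 : ℝ) / (Fintype.card ι : ℝ)) /
        (∏ j, x j) ^ ((1 : ℝ) / (Fintype.card κ : ℝ))}

/-- Size of a matrix: the sum of all entries. -/
noncomputable def matSize {ι κ : Type*} [Fintype ι] [Fintype κ] (A : Matrix ι κ ℝ) : ℝ :=
  ∑ i, ∑ j, A i j

/-- The measure Δ of distance to doubly balanced. -/
noncomputable def matDelta {ι κ : Type*} [Fintype ι] [Fintype κ] (A : Matrix ι κ ℝ) : ℝ :=
  (1 / (Fintype.card ι : ℝ)) * ∑ i, (matSize A - (Fintype.card ι : ℝ) * ∑ j, A i j) ^ 2 +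
  (1 / (Fintype.card κ : ℝ)) * ∑ j, (matSize A - (Fintype.card κ : ℝ) * ∑ i, A i j) ^ 2

/-- Capacity of an operator given by matrices U_1, ..., U_k. -/
noncomputable def opCap {k m n : ℕ} (U : Fin k → Matrix (Fin m) (Fin n) ℝ) : ℝ :=
  sInf {c : ℝ | ∃ X : Matrix (Fin n) (Fin n) ℝ, X.PosDef ∧
    c = (m : ℝ) * (∑ i, U i * X * (U i)ᵀ).det ^ ((1 : ℝ) / (m : ℝ)) /
        X.det ^ ((1 : ℝ) / (n : ℝ))}

/-- Size of an operator. -/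
noncomputable def opSize {k m n : ℕ} (U : Fin k → Matrix (Fin m) (Fin n) ℝ) : ℝ :=
  (∑ i, U i * (U i)ᵀ).trace

/-- The measure Δ of distance to doubly balanced for an operator. -/
noncomputable def opDelta {k m n : ℕ} (U : Fin k → Matrix (Fin m) (Fin n) ℝ) : ℝ :=
  (1 / (m : ℝ)) *
    ((opSize U • (1 : Matrix (Fin m) (Fin m) ℝ) - (m : ℝ) • ∑ i, U i * (U i)ᵀ) ^ 2).trace +
  (1 / (n : ℝ)) *
    ((opSize U • (1 : Matrix (Fin n) (Fin n) ℝ) - (n : ℝ) • ∑ i, (U i)ᵀ * U i) ^ 2).trace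

namespace CapRed

open Real Filter Topology Finset

variable {m n : ℕ}

/-- The function whose infimum over positive `x` is `matCap`. -/
noncomputable def fprod (m n : ℕ) (A : Matrix (Fin m) (Fin n) ℝ) (x : Fin n → ℝ) : ℝ :=
  (m : ℝ) * (∏ i, A.mulVec x i) ^ ((1 : ℝ) / (m : ℝ)) /
    (∏ j, x j) ^ ((1 : ℝ) / (n : ℝ))

lemma matCap_eq (A : Matrix (Fin m) (Fin n) ℝ) :
    matCap A = sInf {c : ℝ | ∃ x : Fin n → ℝ, (∀ j, 0 < x j) ∧ c = fprod m n A x} := by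
  simp only [matCap, Fintype.card_fin, fprod]

lemma mulVec_nonneg {A : Matrix (Fin m) (Fin n) ℝ} (hA : ∀ i j, 0 ≤ A i j)
    {x : Fin n → ℝ} (hx : ∀ j, 0 ≤ x j) (i : Fin m) : 0 ≤ A.mulVec x i := by
  simp only [Matrix.mulVec, dotProduct]
  exact Finset.sum_nonneg fun j _ => mul_nonneg (hA i j) (hx j)

lemma mulVec_pos {A : Matrix (Fin m) (Fin n) ℝ} (hA : ∀ i j, 0 ≤ A i j)
    {x : Fin n → ℝ} (hx : ∀ j, 0 < x j) {i : Fin m} {j₀ : Fin n} (hij : 0 < A i j₀) :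
    0 < A.mulVec x i := by
  simp only [Matrix.mulVec, dotProduct]
  have h1 : 0 < A i j₀ * x j₀ := mul_pos hij (hx j₀)
  have h2 : ∀ j ∈ Finset.univ, 0 ≤ A i j * x j :=
    fun j _ => mul_nonneg (hA i j) (hx j).le
  calc 0 < A i j₀ * x j₀ := h1
    _ ≤ ∑ j, A i j * x j := Finset.single_le_sum h2 (Finset.mem_univ j₀)

lemma fprod_nonneg (hm : 0 < m) {A : Matrix (Fin m) (Fin n) ℝ} (hA : ∀ i j, 0 ≤ A i j)
    {x : Fin n → ℝ} (hx : ∀ j, 0 < x j) : 0 ≤ fprod m n A x := by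
  have h1 : (0:ℝ) ≤ ∏ i, A.mulVec x i :=
    Finset.prod_nonneg fun i _ => mulVec_nonneg hA (fun j => (hx j).le) i
  have h2 : (0:ℝ) ≤ ∏ j, x j := Finset.prod_nonneg fun j _ => (hx j).le
  exact div_nonneg (mul_nonneg (by positivity) (Real.rpow_nonneg h1 _)) (Real.rpow_nonneg h2 _)

lemma fprod_mem (A : Matrix (Fin m) (Fin n) ℝ) {x : Fin n → ℝ} (hx : ∀ j, 0 < x j) :
    fprod m n A x ∈ {c : ℝ | ∃ x : Fin n → ℝ, (∀ j, 0 < x j) ∧ c = fprod m n A x} :=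
  ⟨x, hx, rfl⟩

lemma capSet_nonempty (A : Matrix (Fin m) (Fin n) ℝ) :
    {c : ℝ | ∃ x : Fin n → ℝ, (∀ j, 0 < x j) ∧ c = fprod m n A x}.Nonempty :=
  ⟨fprod m n A (fun _ => 1), fprod_mem A (fun _ => one_pos)⟩

lemma capSet_bddBelow (hm : 0 < m) {A : Matrix (Fin m) (Fin n) ℝ} (hA : ∀ i j, 0 ≤ A i j) :
    BddBelow {c : ℝ | ∃ x : Fin n → ℝ, (∀ j, 0 < x j) ∧ c = fprod m n A x} := by
  refine ⟨0, ?_⟩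
  rintro c ⟨x, hx, rfl⟩
  exact fprod_nonneg hm hA hx

lemma matCap_le_fprod (hm : 0 < m) {A : Matrix (Fin m) (Fin n) ℝ} (hA : ∀ i j, 0 ≤ A i j)
    {x : Fin n → ℝ} (hx : ∀ j, 0 < x j) : matCap A ≤ fprod m n A x := by
  rw [matCap_eq]
  exact csInf_le (capSet_bddBelow hm hA) (fprod_mem A hx)

lemma matCap_nonneg (hm : 0 < m) {A : Matrix (Fin m) (Fin n) ℝ} (hA : ∀ i j, 0 ≤ A i j) :
    0 ≤ matCap A := by
  rw [matCap_eq]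
  apply Real.sInf_nonneg
  rintro c ⟨x, hx, rfl⟩
  exact fprod_nonneg hm hA hx

/-- `b ^ (∑ p) = ∏ b ^ p` for a positive base. -/
lemma rpow_finset_sum {b : ℝ} (hb : 0 < b) {ι : Type*} (s : Finset ι) (p : ι → ℝ) :
    b ^ (∑ i ∈ s, p i) = ∏ i ∈ s, b ^ p i := by
  rw [Real.rpow_def_of_pos hb, Finset.mul_sum, Real.exp_sum]
  exact Finset.prod_congr rfl fun i _ => (Real.rpow_def_of_pos hb _).symm


/-- The dual functional. -/
noncomputable def Phi (m n : ℕ) (B P : Matrix (Fin m) (Fin n) ℝ) : ℝ :=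
  (m : ℝ) * ∏ i, ∏ j, (B i j / ((m : ℝ) * P i j)) ^ (P i j)

lemma Phi_exp (B P : Matrix (Fin m) (Fin n) ℝ)
    (h : ∀ i j, P i j ≠ 0 → 0 < B i j / ((m:ℝ) * P i j)) :
    Phi m n B P
      = m * Real.exp (∑ i, ∑ j, P i j * Real.log (B i j / ((m:ℝ) * P i j))) := by
  unfold Phi
  congr 1
  rw [Real.exp_sum]
  refine Finset.prod_congr rfl fun i _ => ?_
  rw [Real.exp_sum]
  refine Finset.prod_congr rfl fun j _ => ?_
  rcases eq_or_ne (P i j) 0 with h0 | h0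
  · simp [h0]
  · rw [Real.rpow_def_of_pos (h i j h0), mul_comm]

lemma fprod_eq_exp (hm : 0 < m) (hn : 0 < n) {B : Matrix (Fin m) (Fin n) ℝ} {x : Fin n → ℝ}
    (hx : ∀ j, 0 < x j) (hmv : ∀ i, 0 < B.mulVec x i) :
    fprod m n B x = m * Real.exp ((1/(m:ℝ)) * ∑ i, Real.log (B.mulVec x i)
      - (1/(n:ℝ)) * ∑ j, Real.log (x j)) := by
  unfold fprod
  have hN : (∏ i, B.mulVec x i) ^ ((1:ℝ)/(m:ℝ))
      = Real.exp ((1/(m:ℝ)) * ∑ i, Real.log (B.mulVec x i)) := by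
    rw [Real.rpow_def_of_pos (Finset.prod_pos fun i _ => hmv i),
        Real.log_prod (fun i _ => (hmv i).ne'), mul_comm]
  have hD : (∏ j, x j) ^ ((1:ℝ)/(n:ℝ))
      = Real.exp ((1/(n:ℝ)) * ∑ j, Real.log (x j)) := by
    rw [Real.rpow_def_of_pos (Finset.prod_pos fun j _ => hx j),
        Real.log_prod (fun j _ => (hx j).ne'), mul_comm]
  rw [hN, hD, mul_div_assoc, ← Real.exp_sub]

lemma weak_duality (hm : 0 < m) (hn : 0 < n) (B P : Matrix (Fin m) (Fin n) ℝ)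
    (hB : ∀ i j, 0 ≤ B i j) (hP : ∀ i j, 0 ≤ P i j)
    (hrow : ∀ i, ∑ j, P i j = 1/(m:ℝ)) (hcol : ∀ j, ∑ i, P i j = 1/(n:ℝ)) :
    Phi m n B P ≤ matCap B := by
  classical
  rw [matCap_eq]
  apply le_csInf (capSet_nonempty B)
  rintro c ⟨x, hx, rfl⟩
  by_cases hzero : ∃ i j, 0 < P i j ∧ B i j = 0
  · obtain ⟨i0, j0, hPij, hBij⟩ := hzero
    have hfac : (B i0 j0 / ((m:ℝ) * P i0 j0)) ^ (P i0 j0) = 0 := by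
      rw [hBij, zero_div, Real.zero_rpow hPij.ne']
    have hPhi0 : Phi m n B P = 0 := by
      unfold Phi
      rw [Finset.prod_eq_zero (Finset.mem_univ i0)
        (Finset.prod_eq_zero (Finset.mem_univ j0) hfac), mul_zero]
    rw [hPhi0]; exact fprod_nonneg hm hB hx
  · push_neg at hzero
    have hPB : ∀ i j, P i j ≠ 0 → 0 < B i j := by
      intro i j h
      rcases (hB i j).lt_or_eq with h' | h'
      · exact h'
      · exact absurd h'.symm (hzero i j (lt_of_le_of_ne (hP i j) (Ne.symm h)))
    have hmv : ∀ i, 0 < B.mulVec x i := by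
      intro i
      have hne : ∃ j, P i j ≠ 0 := by
        by_contra hcon
        push_neg at hcon
        have h0 : ∑ j, P i j = 0 := Finset.sum_eq_zero fun j _ => hcon j
        rw [hrow i] at h0
        have : (0:ℝ) < 1/(m:ℝ) := by positivity
        linarith
      obtain ⟨j, hj⟩ := hne
      exact mulVec_pos hB hx (hPB i j hj)
    -- per-row Jensen inequality
    have key : ∀ i, ∑ j, ((m:ℝ) * P i j) * Real.log (B i j * x j / ((m:ℝ) * P i j))
        ≤ Real.log (B.mulVec x i) := by
      intro i
      set t : Finset (Fin n) := Finset.univ.filter (fun j => P i j ≠ 0) with ht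
      have hmem_t : ∀ {j}, j ∈ t ↔ P i j ≠ 0 := by
        intro j; simp [ht]
    -- sums restrict to t
      have hrestr : ∑ j, ((m:ℝ) * P i j) * Real.log (B i j * x j / ((m:ℝ) * P i j))
          = ∑ j ∈ t, ((m:ℝ) * P i j) * Real.log (B i j * x j / ((m:ℝ) * P i j)) := by
        refine (Finset.sum_subset (Finset.subset_univ t) ?_).symm
        intro j _ hj
        have : P i j = 0 := by
          by_contra hc; exact hj (hmem_t.mpr hc)
        rw [this, mul_zero, zero_mul]
      have hwsum : ∑ j ∈ t, (m:ℝ) * P i j = 1 := by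
        have : ∑ j ∈ t, (m:ℝ) * P i j = ∑ j, (m:ℝ) * P i j := by
          refine Finset.sum_subset (Finset.subset_univ t) ?_
          intro j _ hj
          have : P i j = 0 := by
            by_contra hc; exact hj (hmem_t.mpr hc)
          rw [this, mul_zero]
        rw [this, ← Finset.mul_sum, hrow i]
        field_simp
      have htne : t.Nonempty := by
        by_contra hcon
        rw [Finset.not_nonempty_iff_eq_empty] at hcon
        rw [hcon, Finset.sum_empty] at hwsum
        norm_num at hwsum
      have hconc : ConcaveOn ℝ (Set.Ioi 0) Real.log := strictConcaveOn_log_Ioi.concaveOn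
      have hjensen := hconc.le_map_sum (t := t) (w := fun j => (m:ℝ) * P i j)
        (p := fun j => B i j * x j / ((m:ℝ) * P i j))
        (fun j _ => mul_nonneg (Nat.cast_nonneg m) (hP i j)) hwsum
        (fun j hj => by
          have hPj := hmem_t.mp hj
          have hBj := hPB i j hPj
          have hmp : 0 < (m:ℝ) * P i j :=
            mul_pos (Nat.cast_pos.mpr hm) (lt_of_le_of_ne (hP i j) (Ne.symm hPj))
          exact Set.mem_Ioi.mpr (div_pos (mul_pos hBj (hx j)) hmp))
      simp only [smul_eq_mul] at hjensen
      have hwp : ∀ j ∈ t, (m:ℝ) * P i j * (B i j * x j / ((m:ℝ) * P i j)) = B i j * x j := by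
        intro j hj
        have hPj := hmem_t.mp hj
        have hne : ((m:ℝ) * P i j) ≠ 0 :=
          (mul_pos (Nat.cast_pos.mpr hm) (lt_of_le_of_ne (hP i j) (Ne.symm hPj))).ne'
        field_simp
      rw [Finset.sum_congr rfl hwp] at hjensen
      have hsumpos : 0 < ∑ j ∈ t, B i j * x j := by
        obtain ⟨j0, hj0⟩ := htne
        refine Finset.sum_pos' (fun j hj => mul_nonneg (hB i j) (hx j).le) ⟨j0, hj0, ?_⟩
        exact mul_pos (hPB i j0 (hmem_t.mp hj0)) (hx j0)
      have hsumle : ∑ j ∈ t, B i j * x j ≤ B.mulVec x i := by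
        have : B.mulVec x i = ∑ j, B i j * x j := by
          simp [Matrix.mulVec, dotProduct]
        rw [this]
        exact Finset.sum_le_sum_of_subset_of_nonneg (Finset.subset_univ t)
          (fun j _ _ => mul_nonneg (hB i j) (hx j).le)
      calc ∑ j, ((m:ℝ) * P i j) * Real.log (B i j * x j / ((m:ℝ) * P i j))
          = ∑ j ∈ t, ((m:ℝ) * P i j) * Real.log (B i j * x j / ((m:ℝ) * P i j)) := hrestr
        _ ≤ Real.log (∑ j ∈ t, B i j * x j) := hjensen
        _ ≤ Real.log (B.mulVec x i) := (Real.log_le_log_iff hsumpos (hmv i)).mpr hsumle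
    -- assemble
    have hT : ∑ i, ∑ j, P i j * Real.log (B i j / ((m:ℝ) * P i j))
        ≤ (1/(m:ℝ)) * ∑ i, Real.log (B.mulVec x i) - (1/(n:ℝ)) * ∑ j, Real.log (x j) := by
      have hsplit : ∀ i j, P i j * Real.log (B i j / ((m:ℝ) * P i j))
          = P i j * Real.log (B i j * x j / ((m:ℝ) * P i j)) - P i j * Real.log (x j) := by
        intro i j
        rcases eq_or_ne (P i j) 0 with h0 | h0
        · rw [h0]; ring
        · have hBj := hPB i j h0
          have hmP : (0:ℝ) < (m:ℝ) * P i j :=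
            mul_pos (Nat.cast_pos.mpr hm) (lt_of_le_of_ne (hP i j) (Ne.symm h0))
          have harg : B i j * x j / ((m:ℝ) * P i j)
              = (B i j / ((m:ℝ) * P i j)) * x j := by ring
          rw [harg, Real.log_mul (by positivity) (hx j).ne']
          ring
      calc ∑ i, ∑ j, P i j * Real.log (B i j / ((m:ℝ) * P i j))
          = ∑ i, ∑ j, (P i j * Real.log (B i j * x j / ((m:ℝ) * P i j))
              - P i j * Real.log (x j)) := by
            refine Finset.sum_congr rfl fun i _ => Finset.sum_congr rfl fun j _ => hsplit i j
        _ = ∑ i, ∑ j, P i j * Real.log (B i j * x j / ((m:ℝ) * P i j))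
            - ∑ j, (∑ i, P i j) * Real.log (x j) := by
            simp only [Finset.sum_sub_distrib]
            congr 1
            rw [Finset.sum_comm]
            exact Finset.sum_congr rfl fun j _ => (Finset.sum_mul _ _ _).symm
        _ = ∑ i, (1/(m:ℝ)) * ∑ j, ((m:ℝ) * P i j) * Real.log (B i j * x j / ((m:ℝ) * P i j))
            - (1/(n:ℝ)) * ∑ j, Real.log (x j) := by
            congr 1
            · refine Finset.sum_congr rfl fun i _ => ?_
              rw [Finset.mul_sum]
              refine Finset.sum_congr rfl fun j _ => ?_
              have hm' : (m:ℝ) ≠ 0 := Nat.cast_ne_zero.mpr hm.ne'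
              field_simp
            · rw [Finset.mul_sum]
              exact Finset.sum_congr rfl fun j _ => by rw [hcol j]
        _ ≤ ∑ i, (1/(m:ℝ)) * Real.log (B.mulVec x i) - (1/(n:ℝ)) * ∑ j, Real.log (x j) := by
            apply sub_le_sub_right
            exact Finset.sum_le_sum fun i _ => mul_le_mul_of_nonneg_left (key i) (by positivity)
        _ = (1/(m:ℝ)) * ∑ i, Real.log (B.mulVec x i) - (1/(n:ℝ)) * ∑ j, Real.log (x j) := by
            simp [Finset.mul_sum]
    -- conclude
    have hPhi := Phi_exp B P (fun i j h0 => by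
      have hBj := hPB i j h0
      have hmP : (0:ℝ) < (m:ℝ) * P i j :=
        mul_pos (Nat.cast_pos.mpr hm) (lt_of_le_of_ne (hP i j) (Ne.symm h0))
      exact div_pos hBj hmP)
    rw [hPhi, fprod_eq_exp hm hn hx hmv]
    exact mul_le_mul_of_nonneg_left (Real.exp_le_exp.mpr hT) (Nat.cast_nonneg m)


noncomputable def gfun (m n : ℕ) (A : Matrix (Fin m) (Fin n) ℝ) (y : Fin n → ℝ) : ℝ :=
  (1/(m:ℝ)) * ∑ i, Real.log (A.mulVec (fun j => Real.exp (y j)) i)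
    - (1/(n:ℝ)) * ∑ j, y j

lemma gfun_eq (hm : 0 < m) (hn : 0 < n) {A : Matrix (Fin m) (Fin n) ℝ}
    (hA : ∀ i j, 0 ≤ A i j) (hrowA : ∀ i, ∃ j, 0 < A i j) (y : Fin n → ℝ) :
    fprod m n A (fun j => Real.exp (y j)) = m * Real.exp (gfun m n A y) := by
  have hx : ∀ j, (0:ℝ) < Real.exp (y j) := fun j => Real.exp_pos _
  have hmv : ∀ i, 0 < A.mulVec (fun j => Real.exp (y j)) i := fun i =>
    mulVec_pos hA hx (hrowA i).choose_spec
  rw [fprod_eq_exp hm hn hx hmv]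
  unfold gfun
  simp [Real.log_exp]

lemma strong_duality (hm : 0 < m) (hn : 0 < n) (A : Matrix (Fin m) (Fin n) ℝ)
    (hA : ∀ i j, 0 ≤ A i j) (hcap : 0 < matCap A) {ε : ℝ} (hε : 0 < ε) :
    ∃ (P : Matrix (Fin m) (Fin n) ℝ) (y : Fin n → ℝ),
      (∀ i j, 0 ≤ P i j) ∧ (∀ i j, P i j ≤ 1/(m:ℝ)) ∧
      (∀ i j, A i j = 0 → P i j = 0) ∧
      (∀ i, ∑ j, P i j = 1/(m:ℝ)) ∧
      (∀ j, ∑ i, P i j = 1/(n:ℝ) - 2*ε*(y j)) ∧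
      (ε * ∑ j, (y j)^2 ≤ gfun m n A 0 - (Real.log (matCap A) - Real.log m)) ∧
      matCap A ≤ Phi m n A P := by
  classical
  have hm' : (m:ℝ) ≠ 0 := Nat.cast_ne_zero.mpr hm.ne'
  have hn' : (n:ℝ) ≠ 0 := Nat.cast_ne_zero.mpr hn.ne'
  -- A has no zero row
  have hrowA : ∀ i, ∃ j, 0 < A i j := by
    intro i
    by_contra hcon
    push_neg at hcon
    have hzero : ∀ j, A i j = 0 := fun j => le_antisymm (hcon j) (hA i j)
    have h1 : fprod m n A (fun _ => 1) = 0 := by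
      unfold fprod
      have hmv0 : A.mulVec (fun _ => 1) i = 0 := by
        simp [Matrix.mulVec, dotProduct, hzero]
      rw [Finset.prod_eq_zero (Finset.mem_univ i) hmv0,
        Real.zero_rpow (by positivity)]
      simp
    have := matCap_le_fprod hm hA (fun _ : Fin n => one_pos)
    rw [h1] at this
    linarith
  set Lb := Real.log (matCap A) - Real.log m with hLbdef
  have hLb : ∀ y, Lb ≤ gfun m n A y := by
    intro y
    have h1 := matCap_le_fprod hm hA (x := fun j => Real.exp (y j)) (fun j => Real.exp_pos _)
    rw [gfun_eq hm hn hA hrowA y] at h1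
    have h2 : Real.log (matCap A) ≤ Real.log ((m:ℝ) * Real.exp (gfun m n A y)) :=
      Real.log_le_log hcap h1
    rw [Real.log_mul hm' (Real.exp_ne_zero _), Real.log_exp] at h2
    rw [hLbdef]; linarith
  set Gf := fun y : Fin n → ℝ => gfun m n A y + ε * ∑ j, (y j)^2 with hGfdef
  -- continuity
  have hmvpos : ∀ (y : Fin n → ℝ) i, 0 < A.mulVec (fun j => Real.exp (y j)) i := fun y i =>
    mulVec_pos hA (fun j => Real.exp_pos _) (hrowA i).choose_spec
  have hGf_cont : Continuous Gf := by
    apply Continuous.add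
    · apply Continuous.sub
      · apply Continuous.mul continuous_const
        apply continuous_finset_sum
        intro i _
        have heq : (fun y : Fin n → ℝ => Real.log (A.mulVec (fun j => Real.exp (y j)) i))
            = fun y : Fin n → ℝ => Real.log (∑ j, A i j * Real.exp (y j)) := by
          funext y; simp [Matrix.mulVec, dotProduct]
        rw [heq]
        apply Continuous.log
        · exact continuous_finset_sum _ fun j _ =>
            continuous_const.mul (Real.continuous_exp.comp (continuous_apply j))
        · intro y
          have := hmvpos y i
          simp only [Matrix.mulVec, dotProduct] at this
          exact this.ne'
      · exact continuous_const.mul (continuous_finset_sum _ fun j _ => continuous_apply j)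
    · exact continuous_const.mul
        (continuous_finset_sum _ fun j _ => (continuous_apply j).pow 2)
  -- existence of a global minimizer
  set a := (gfun m n A 0 - Lb)/ε with hadef
  have ha : 0 ≤ a := div_nonneg (by linarith [hLb 0]) hε.le
  set R := Real.sqrt a + 1 with hRdef
  have hR1 : (1:ℝ) ≤ R := le_add_of_nonneg_left (Real.sqrt_nonneg a)
  have hRsq : a ≤ R^2 := by
    rw [hRdef]
    nlinarith [Real.sq_sqrt ha, Real.sqrt_nonneg a]
  set K : Set (Fin n → ℝ) := Set.Icc (fun _ => -R) (fun _ => R) with hKdef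
  have hK : IsCompact K := isCompact_Icc
  have h0K : (0 : Fin n → ℝ) ∈ K := by
    constructor <;> intro j <;> simp <;> linarith
  obtain ⟨y₀, hy₀K, hy₀min⟩ := hK.exists_isMinOn ⟨0, h0K⟩ hGf_cont.continuousOn
  have hGf0 : Gf 0 = gfun m n A 0 := by simp [hGfdef]
  have hglobal : ∀ y, Gf y₀ ≤ Gf y := by
    intro y
    by_cases hy : y ∈ K
    · exact hy₀min hy
    · have hj : ∃ j, R^2 ≤ (y j)^2 := by
        rw [hKdef, Set.mem_Icc] at hy
        push_neg at hy
        by_cases h1 : (fun _ => -R : Fin n → ℝ) ≤ y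
        · obtain ⟨j, hj⟩ := not_forall.mp (fun hall => hy h1 (fun j => (hall j)))
          push_neg at hj
          exact ⟨j, by nlinarith⟩
        · rw [Pi.le_def] at h1
          push_neg at h1
          obtain ⟨j, hj⟩ := h1
          exact ⟨j, by nlinarith⟩
      obtain ⟨j, hj⟩ := hj
      have h1 : (y j)^2 ≤ ∑ j', (y j')^2 :=
        Finset.single_le_sum (fun j' _ => sq_nonneg (y j')) (Finset.mem_univ j)
      have h2 : Lb + ε * R^2 ≤ Gf y := by
        have := hLb y
        have hmul : ε * R^2 ≤ ε * ∑ j', (y j')^2 :=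
          mul_le_mul_of_nonneg_left (le_trans hj h1) hε.le
        rw [hGfdef]; dsimp only; linarith
      have h3 : gfun m n A 0 ≤ Lb + ε * R^2 := by
        have : ε * a = gfun m n A 0 - Lb := by
          rw [hadef]; field_simp
        nlinarith [mul_le_mul_of_nonneg_left hRsq hε.le]
      have h4 : Gf y₀ ≤ Gf 0 := hy₀min h0K
      rw [hGf0] at h4
      linarith
  -- the minimizer data
  set x := fun j => Real.exp (y₀ j) with hxdef
  have hxpos : ∀ j, 0 < x j := fun j => Real.exp_pos _
  have hmv : ∀ i, 0 < A.mulVec x i := hmvpos y₀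
  -- first order conditions
  have foc : ∀ j, (1/(m:ℝ)) * (∑ i, A i j * x j / A.mulVec x i)
      - 1/(n:ℝ) + ε * (2 * y₀ j) = 0 := by
    intro j
    set d : Fin m → ℝ := fun i => A i j * Real.exp (y₀ j) with hddef
    set c : Fin m → ℝ := fun i => ∑ j' ∈ Finset.univ \ {j}, A i j' * Real.exp (y₀ j') with hcdef
    have hmulVec : ∀ (i : Fin m) (s : ℝ),
        A.mulVec (fun j' => Real.exp (Function.update y₀ j (y₀ j + s) j')) i
          = c i + d i * Real.exp s := by
      intro i s
      have hfun : (fun j' => A i j' * Real.exp (Function.update y₀ j (y₀ j + s) j'))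
          = Function.update (fun j' => A i j' * Real.exp (y₀ j')) j
              (A i j * Real.exp (y₀ j + s)) := by
        funext j'
        rcases eq_or_ne j' j with rfl | hne
        · simp
        · simp [Function.update_of_ne hne]
      simp only [Matrix.mulVec, dotProduct]
      rw [hfun, Finset.sum_update_of_mem (Finset.mem_univ j), Real.exp_add]
      rw [hcdef, hddef]; ring
    have hcdpos : ∀ (i : Fin m) (s : ℝ), 0 < c i + d i * Real.exp s := by
      intro i s
      rw [← hmulVec i s]
      exact hmvpos _ i
    set Sy := ∑ j', y₀ j' with hSydef
    set Sq := ∑ j' ∈ Finset.univ \ {j}, (y₀ j')^2 with hSqdef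
    set φ : ℝ → ℝ := fun s => (1/(m:ℝ)) * ∑ i, Real.log (c i + d i * Real.exp s)
      - (1/(n:ℝ)) * (s + Sy) + ε * ((y₀ j + s)^2 + Sq) with hφdef
    have hGfu : ∀ s, Gf (Function.update y₀ j (y₀ j + s)) = φ s := by
      intro s
      rw [hGfdef, hφdef]
      dsimp only
      unfold gfun
      congr 1
      · congr 1
        · congr 1
          exact Finset.sum_congr rfl fun i _ => by rw [hmulVec i s]
        · congr 1
          rw [Finset.sum_update_of_mem (Finset.mem_univ j), hSydef,
            Finset.sum_eq_sum_sdiff_singleton_add (Finset.mem_univ j) y₀]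
          ring
      · congr 1
        have hfun : (fun j' => (Function.update y₀ j (y₀ j + s) j')^2)
            = Function.update (fun j' => (y₀ j')^2) j ((y₀ j + s)^2) := by
          funext j'
          rcases eq_or_ne j' j with rfl | hne
          · simp
          · simp [Function.update_of_ne hne]
        rw [hfun, Finset.sum_update_of_mem (Finset.mem_univ j)]
    have hφ0 : φ 0 = Gf y₀ := by
      rw [← hGfu 0]
      congr 1
      funext j'
      rcases eq_or_ne j' j with rfl | hne
      · simp
      · simp [Function.update_of_ne hne]
    have hlocmin : IsLocalMin φ 0 := by
      apply Filter.Eventually.of_forall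
      intro s
      rw [hφ0, ← hGfu s]
      exact hglobal _
    have hlog : ∀ i : Fin m, HasDerivAt (fun s => Real.log (c i + d i * Real.exp s))
        (d i * Real.exp 0 / (c i + d i * Real.exp 0)) 0 := by
      intro i
      have h1 : HasDerivAt (fun s => c i + d i * Real.exp s) (d i * Real.exp 0) 0 :=
        ((Real.hasDerivAt_exp 0).const_mul (d i)).const_add (c i)
      exact h1.log (hcdpos i 0).ne'
    have hsumd : HasDerivAt (fun s => ∑ i, Real.log (c i + d i * Real.exp s))
        (∑ i, d i * Real.exp 0 / (c i + d i * Real.exp 0)) 0 :=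
      HasDerivAt.fun_sum fun i _ => hlog i
    have hlin : HasDerivAt (fun s : ℝ => s + Sy) 1 0 := (hasDerivAt_id 0).add_const Sy
    have hsq2 : HasDerivAt (fun s : ℝ => (y₀ j + s)^2 + Sq)
        ((2:ℕ) * (y₀ j + 0)^(2-1) * 1) 0 :=
      (((hasDerivAt_id 0).const_add (y₀ j)).pow 2).add_const Sq
    have hφderiv : HasDerivAt φ
        ((1/(m:ℝ)) * (∑ i, d i * Real.exp 0 / (c i + d i * Real.exp 0))
          - (1/(n:ℝ)) * 1 + ε * ((2:ℕ) * (y₀ j + 0)^(2-1) * 1)) 0 :=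
      ((hsumd.const_mul _).sub (hlin.const_mul _)).add (hsq2.const_mul ε)
    have hD0 := hlocmin.hasDerivAt_eq_zero hφderiv
    have hterm : ∀ i, d i * Real.exp 0 / (c i + d i * Real.exp 0)
        = A i j * x j / A.mulVec x i := by
      intro i
      have h1 : c i + d i * Real.exp 0 = A.mulVec x i := by
        rw [← hmulVec i 0]
        congr 1
        funext j'
        rcases eq_or_ne j' j with rfl | hne
        · simp [hxdef]
        · simp [Function.update_of_ne hne, hxdef]
      rw [h1, Real.exp_zero, mul_one, hddef]
    rw [Finset.sum_congr rfl (fun i _ => hterm i)] at hD0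
    simp only [Real.exp_zero, pow_one, add_zero, mul_one, Nat.cast_ofNat] at hD0
    linarith [hD0]
  -- the dual matrix
  set P : Matrix (Fin m) (Fin n) ℝ :=
    Matrix.of fun i j => (1/(m:ℝ)) * (A i j * x j / A.mulVec x i) with hPdef
  have hPapp : ∀ i j, P i j = (1/(m:ℝ)) * (A i j * x j / A.mulVec x i) := fun i j => rfl
  have hPnn : ∀ i j, 0 ≤ P i j := by
    intro i j
    rw [hPapp]
    exact mul_nonneg (by positivity)
      (div_nonneg (mul_nonneg (hA i j) (hxpos j).le) (hmv i).le)
  have hProw : ∀ i, ∑ j, P i j = 1/(m:ℝ) := by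
    intro i
    have hsum : ∑ j, A i j * x j = A.mulVec x i := by
      simp [Matrix.mulVec, dotProduct]
    calc ∑ j, P i j = ∑ j, (1/(m:ℝ)) * (A i j * x j / A.mulVec x i) :=
          Finset.sum_congr rfl fun j _ => hPapp i j
      _ = (1/(m:ℝ)) * ((∑ j, A i j * x j) / A.mulVec x i) := by
          rw [← Finset.mul_sum, ← Finset.sum_div]
      _ = 1/(m:ℝ) := by rw [hsum, div_self (hmv i).ne', mul_one]
  have hPle : ∀ i j, P i j ≤ 1/(m:ℝ) := by
    intro i j
    rw [← hProw i]
    exact Finset.single_le_sum (fun j' _ => hPnn i j') (Finset.mem_univ j)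
  have hPzero : ∀ i j, A i j = 0 → P i j = 0 := by
    intro i j h
    rw [hPapp, h, zero_mul, zero_div, mul_zero]
  have hPcol : ∀ j, ∑ i, P i j = 1/(n:ℝ) - 2*ε*(y₀ j) := by
    intro j
    have h1 : ∑ i, P i j = (1/(m:ℝ)) * ∑ i, A i j * x j / A.mulVec x i := by
      rw [Finset.mul_sum]
      exact Finset.sum_congr rfl fun i _ => hPapp i j
    have := foc j
    rw [h1]; linarith
  have hbound : ε * ∑ j, (y₀ j)^2 ≤ gfun m n A 0 - Lb := by
    have h1 : Gf y₀ ≤ Gf 0 := hglobal 0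
    rw [hGf0] at h1
    have h2 := hLb y₀
    rw [hGfdef] at h1
    dsimp only at h1
    linarith
  -- the key inequality: matCap A ≤ Phi m n A P
  have hPA : ∀ i j, P i j ≠ 0 → 0 < A i j := by
    intro i j h
    rcases (hA i j).lt_or_eq with h' | h'
    · exact h'
    · exact absurd (hPzero i j h'.symm) h
  have hKI : matCap A ≤ Phi m n A P := by
    have hPhi := Phi_exp A P (fun i j h0 => by
      have hAij := hPA i j h0
      have hmPpos : (0:ℝ) < (m:ℝ) * P i j :=
        mul_pos (Nat.cast_pos.mpr hm) (lt_of_le_of_ne (hPnn i j) (Ne.symm h0))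
      exact div_pos hAij hmPpos)
    have hterm : ∀ i j, P i j * Real.log (A i j / ((m:ℝ) * P i j))
        = P i j * (Real.log (A.mulVec x i) - y₀ j) := by
      intro i j
      rcases eq_or_ne (P i j) 0 with h0 | h0
      · rw [h0, zero_mul, zero_mul]
      · have hAij := hPA i j h0
        have hmP : (m:ℝ) * P i j = A i j * x j / A.mulVec x i := by
          rw [hPapp]
          field_simp
        have harg : A i j / ((m:ℝ) * P i j) = A.mulVec x i / x j := by
          rw [hmP, div_div_eq_mul_div, mul_div_mul_left _ _ hAij.ne']
        rw [harg, Real.log_div (hmv i).ne' (hxpos j).ne', hxdef, Real.log_exp]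
    have hT : ∑ i, ∑ j, P i j * Real.log (A i j / ((m:ℝ) * P i j))
        = gfun m n A y₀ + 2*ε * ∑ j, (y₀ j)^2 := by
      calc ∑ i, ∑ j, P i j * Real.log (A i j / ((m:ℝ) * P i j))
          = ∑ i, ∑ j, (P i j * Real.log (A.mulVec x i) - P i j * y₀ j) := by
            refine Finset.sum_congr rfl fun i _ => Finset.sum_congr rfl fun j _ => ?_
            rw [hterm i j]; ring
        _ = ∑ i, (∑ j, P i j) * Real.log (A.mulVec x i) - ∑ j, (∑ i, P i j) * y₀ j := by
            simp only [Finset.sum_sub_distrib]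
            congr 1
            · exact Finset.sum_congr rfl fun i _ => (Finset.sum_mul _ _ _).symm
            · rw [Finset.sum_comm]
              exact Finset.sum_congr rfl fun j _ => (Finset.sum_mul _ _ _).symm
        _ = (1/(m:ℝ)) * ∑ i, Real.log (A.mulVec x i)
            - ∑ j, ((1/(n:ℝ)) - 2*ε*(y₀ j)) * y₀ j := by
            congr 1
            · rw [Finset.mul_sum]
              exact Finset.sum_congr rfl fun i _ => by rw [hProw i]
            · exact Finset.sum_congr rfl fun j _ => by rw [hPcol j]
        _ = gfun m n A y₀ + 2*ε * ∑ j, (y₀ j)^2 := by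
            unfold gfun
            have hexpand : ∀ j, ((1/(n:ℝ)) - 2*ε*(y₀ j)) * y₀ j
                = (1/(n:ℝ)) * y₀ j - (2*ε) * (y₀ j)^2 := fun j => by ring
            rw [Finset.sum_congr rfl fun j _ => hexpand j, Finset.sum_sub_distrib]
            simp only [← Finset.mul_sum]
            ring
    rw [hPhi, hT]
    have h1 : matCap A ≤ fprod m n A x := matCap_le_fprod hm hA hxpos
    rw [hxdef] at h1
    rw [gfun_eq hm hn hA hrowA y₀] at h1
    calc matCap A ≤ (m:ℝ) * Real.exp (gfun m n A y₀) := h1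
      _ ≤ (m:ℝ) * Real.exp (gfun m n A y₀ + 2*ε * ∑ j, (y₀ j)^2) := by
          apply mul_le_mul_of_nonneg_left _ (Nat.cast_nonneg m)
          apply Real.exp_le_exp.mpr
          have : 0 ≤ 2*ε * ∑ j, (y₀ j)^2 :=
            mul_nonneg (by linarith) (Finset.sum_nonneg fun j _ => sq_nonneg _)
          linarith
  exact ⟨P, y₀, hPnn, hPle, hPzero, hProw, hPcol, hbound, hKI⟩


lemma factor_eq {C p : ℝ} (hm : 0 < m) (hC : 0 < C) (hp : 0 ≤ p) :
    (C / ((m:ℝ) * p)) ^ p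
      = Real.exp (p * Real.log C - p * Real.log m - p * Real.log p) := by
  rcases hp.lt_or_eq with hp' | hp'
  · have hmp : (0:ℝ) < (m:ℝ) * p := mul_pos (Nat.cast_pos.mpr hm) hp'
    rw [Real.rpow_def_of_pos (div_pos hC hmp),
      Real.log_div hC.ne' hmp.ne', Real.log_mul (Nat.cast_ne_zero.mpr hm.ne') hp'.ne']
    ring_nf
  · rw [← hp', Real.rpow_zero]
    simp

lemma factor_cont {C : ℝ} :
    Continuous (fun p : ℝ => Real.exp (p * Real.log C - p * Real.log m - p * Real.log p)) := by
  apply Real.continuous_exp.comp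
  apply Continuous.sub
  · exact ((continuous_id.mul continuous_const).sub (continuous_id.mul continuous_const))
  · exact Real.continuous_mul_log

lemma cap_le_of_tendsto (hm : 0 < m) (hn : 0 < n)
    (A : Matrix (Fin m) (Fin n) ℝ) (As : ℕ → Matrix (Fin m) (Fin n) ℝ)
    (hAsnn : ∀ s i j, 0 ≤ As s i j) (hAnn : ∀ i j, 0 ≤ A i j)
    (htend : ∀ i j, Filter.Tendsto (fun s => As s i j) Filter.atTop (nhds (A i j)))
    (w : ℕ → ℝ) (v : ℝ) (hv : 0 ≤ v) (hw : Filter.Tendsto w Filter.atTop (nhds v))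
    (hcap : ∀ s, matCap (As s) ≤ w s) : matCap A ≤ v := by
  classical
  by_cases hc0 : matCap A ≤ 0
  · linarith
  push_neg at hc0
  have hεt : ∀ t : ℕ, (0:ℝ) < 1/((t:ℝ)+1) := fun t => by positivity
  choose P y hPnn hPle hPzero hProw hPcol hbound hKI using
    fun t : ℕ => strong_duality hm hn A hAnn hc0 (hεt t)
  -- compactness of the dual sequence
  have hmem : ∀ t, (fun i j => P t i j)
      ∈ Set.Icc (0 : Fin m → Fin n → ℝ) (fun _ _ => 1/(m:ℝ)) := by
    intro t
    simp only [Set.mem_Icc, Pi.le_def]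
    exact ⟨fun i j => by simpa using hPnn t i j, fun i j => hPle t i j⟩
  obtain ⟨Pl, hPlmem, φ, hφmono, hφtend⟩ := isCompact_Icc.tendsto_subseq hmem
  have hPlentry : ∀ i j, Filter.Tendsto (fun t => P (φ t) i j) Filter.atTop (nhds (Pl i j)) :=
    fun i j => tendsto_pi_nhds.mp (tendsto_pi_nhds.mp hφtend i) j
  set Ps : Matrix (Fin m) (Fin n) ℝ := Matrix.of Pl with hPsdef
  have hPsapp : ∀ i j, Ps i j = Pl i j := fun i j => rfl
  have hPsnn : ∀ i j, 0 ≤ Ps i j := by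
    intro i j
    rw [hPsapp]
    have := hPlmem.1
    rw [Pi.le_def] at this
    have := this i
    rw [Pi.le_def] at this
    simpa using this j
  have hPsrow : ∀ i, ∑ j, Ps i j = 1/(m:ℝ) := by
    intro i
    have h1 : Filter.Tendsto (fun t => ∑ j, P (φ t) i j) Filter.atTop (nhds (∑ j, Pl i j)) :=
      tendsto_finset_sum _ fun j _ => hPlentry i j
    have h2 : (fun t => ∑ j, P (φ t) i j) = fun _ => 1/(m:ℝ) := funext fun t => hProw (φ t) i
    rw [h2] at h1
    exact tendsto_nhds_unique h1 tendsto_const_nhds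
  -- the constant bounding ε_t ∑ y_t^2
  set C0 := gfun m n A 0 - (Real.log (matCap A) - Real.log m) with hC0def
  have hC0nn : 0 ≤ C0 := by
    have h1 := hbound 0
    have h2 : 0 ≤ (1/((0:ℕ):ℝ)+1)⁻¹ * ∑ j, (y 0 j)^2 := by positivity
    have h3 : 0 ≤ (1:ℝ)/((0:ℕ)+1) * ∑ j, (y 0 j)^2 :=
      mul_nonneg (hεt 0).le (Finset.sum_nonneg fun j _ => sq_nonneg _)
    linarith
  have hεy0 : ∀ j, Filter.Tendsto (fun t => 2*(1/((φ t : ℝ)+1))*(y (φ t) j))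
      Filter.atTop (nhds 0) := by
    intro j
    have hbnd : ∀ t, ‖2*(1/((φ t : ℝ)+1))*(y (φ t) j)‖
        ≤ 2 * Real.sqrt ((1/((t:ℝ)+1)) * C0) := by
      intro t
      have hε := hεt (φ t)
      have hyb : (1/((φ t : ℝ)+1)) * (y (φ t) j)^2 ≤ C0 := by
        have h1 : (y (φ t) j)^2 ≤ ∑ j', (y (φ t) j')^2 :=
          Finset.single_le_sum (f := fun j' => (y (φ t) j')^2)
            (fun j' _ => sq_nonneg _) (Finset.mem_univ j)
        have h2 := hbound (φ t)
        have h3 := mul_le_mul_of_nonneg_left h1 hε.le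
        linarith
      have hsq : ((1/((φ t : ℝ)+1))*(y (φ t) j))^2 ≤ (1/((t:ℝ)+1)) * C0 := by
        have hle : (1/((φ t : ℝ)+1)) ≤ 1/((t:ℝ)+1) := by
          apply one_div_le_one_div_of_le (by positivity)
          have hnat : t ≤ φ t := hφmono.le_apply
          have hreal : ((t:ℝ)) ≤ ((φ t:ℝ)) := by exact_mod_cast hnat
          linarith
        calc ((1/((φ t : ℝ)+1))*(y (φ t) j))^2
            = (1/((φ t : ℝ)+1)) * ((1/((φ t : ℝ)+1)) * (y (φ t) j)^2) := by ring
          _ ≤ (1/((φ t : ℝ)+1)) * C0 := mul_le_mul_of_nonneg_left hyb hε.le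
          _ ≤ (1/((t:ℝ)+1)) * C0 := mul_le_mul_of_nonneg_right hle hC0nn
      rw [Real.norm_eq_abs]
      have h4 : |(1/((φ t : ℝ)+1))*(y (φ t) j)| ≤ Real.sqrt ((1/((t:ℝ)+1)) * C0) := by
        rw [← Real.sqrt_sq_eq_abs]
        exact Real.sqrt_le_sqrt hsq
      calc |2*(1/((φ t : ℝ)+1))*(y (φ t) j)|
          = 2 * |(1/((φ t : ℝ)+1))*(y (φ t) j)| := by
            rw [mul_assoc, abs_mul]
            norm_num
        _ ≤ 2 * Real.sqrt ((1/((t:ℝ)+1)) * C0) := by linarith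
    have hgt : Filter.Tendsto (fun t : ℕ => 2 * Real.sqrt ((1/((t:ℝ)+1)) * C0))
        Filter.atTop (nhds 0) := by
      have h1 : Filter.Tendsto (fun t : ℕ => (1/((t:ℝ)+1)) * C0) Filter.atTop (nhds 0) := by
        have h0 := tendsto_one_div_add_atTop_nhds_zero_nat.mul_const C0
        rw [zero_mul] at h0
        exact h0
      have h2 : Filter.Tendsto (fun t : ℕ => Real.sqrt ((1/((t:ℝ)+1)) * C0))
          Filter.atTop (nhds (Real.sqrt 0)) := (Real.continuous_sqrt.tendsto 0).comp h1
      rw [Real.sqrt_zero] at h2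
      have h3 := h2.const_mul (2:ℝ)
      rw [mul_zero] at h3
      exact h3
    exact squeeze_zero_norm hbnd hgt
  have hPscol : ∀ j, ∑ i, Ps i j = 1/(n:ℝ) := by
    intro j
    have h1 : Filter.Tendsto (fun t => ∑ i, P (φ t) i j) Filter.atTop (nhds (∑ i, Pl i j)) :=
      tendsto_finset_sum _ fun i _ => hPlentry i j
    have h2 : (fun t => ∑ i, P (φ t) i j)
        = fun t => 1/(n:ℝ) - 2*(1/((φ t : ℝ)+1))*(y (φ t) j) := by
      funext t
      rw [hPcol (φ t) j]
    rw [h2] at h1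
    have h3 : Filter.Tendsto (fun t => 1/(n:ℝ) - 2*(1/((φ t : ℝ)+1))*(y (φ t) j))
        Filter.atTop (nhds (1/(n:ℝ) - 0)) := tendsto_const_nhds.sub (hεy0 j)
    rw [sub_zero] at h3
    exact tendsto_nhds_unique h1 h3
  have hPszero : ∀ i j, A i j = 0 → Ps i j = 0 := by
    intro i j h
    have h1 : (fun t => P (φ t) i j) = fun _ => (0:ℝ) :=
      funext fun t => hPzero (φ t) i j h
    have h2 := hPlentry i j
    rw [h1] at h2
    exact tendsto_nhds_unique h2 tendsto_const_nhds
  -- matCap A ≤ Phi m n A Ps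
  have hfac_tend : ∀ i j, Filter.Tendsto
      (fun t => (A i j / ((m:ℝ) * P (φ t) i j)) ^ (P (φ t) i j)) Filter.atTop
      (nhds ((A i j / ((m:ℝ) * Ps i j)) ^ (Ps i j))) := by
    intro i j
    rcases (hAnn i j).lt_or_eq with hApos | hA0
    · have heq : (fun t => (A i j / ((m:ℝ) * P (φ t) i j)) ^ (P (φ t) i j))
          = fun t => Real.exp ((P (φ t) i j) * Real.log (A i j)
            - (P (φ t) i j) * Real.log m - (P (φ t) i j) * Real.log (P (φ t) i j)) :=
        funext fun t => factor_eq hm hApos (hPnn (φ t) i j)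
      have heq2 : (A i j / ((m:ℝ) * Ps i j)) ^ (Ps i j)
          = Real.exp ((Ps i j) * Real.log (A i j)
            - (Ps i j) * Real.log m - (Ps i j) * Real.log (Ps i j)) :=
        factor_eq hm hApos (hPsnn i j)
      rw [heq, heq2]
      exact (factor_cont.tendsto (Ps i j)).comp (hPlentry i j)
    · have hz : ∀ t, P (φ t) i j = 0 := fun t => hPzero (φ t) i j hA0.symm
      have hz2 : Ps i j = 0 := hPszero i j hA0.symm
      have heq : (fun t => (A i j / ((m:ℝ) * P (φ t) i j)) ^ (P (φ t) i j))
          = fun _ => (1:ℝ) := by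
        funext t
        rw [hz t, Real.rpow_zero]
      rw [heq, hz2, Real.rpow_zero]
      exact tendsto_const_nhds
  have hPhi_tend : Filter.Tendsto (fun t => Phi m n A (P (φ t))) Filter.atTop
      (nhds (Phi m n A Ps)) := by
    unfold Phi
    apply Filter.Tendsto.const_mul
    exact tendsto_finset_prod _ fun i _ => tendsto_finset_prod _ fun j _ => hfac_tend i j
  have hcapPhi : matCap A ≤ Phi m n A Ps :=
    ge_of_tendsto hPhi_tend (Filter.Eventually.of_forall fun t => hKI (φ t))
  -- Phi m n A Ps ≤ v
  have hPhiAs_tend : Filter.Tendsto (fun s => Phi m n (As s) Ps) Filter.atTop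
      (nhds (Phi m n A Ps)) := by
    unfold Phi
    apply Filter.Tendsto.const_mul
    apply tendsto_finset_prod _ fun i _ => tendsto_finset_prod _ fun j _ => ?_
    have hbase : Filter.Tendsto (fun s => As s i j / ((m:ℝ) * Ps i j)) Filter.atTop
        (nhds (A i j / ((m:ℝ) * Ps i j))) := (htend i j).div_const _
    exact ((Real.continuousAt_rpow_const _ _ (Or.inr (hPsnn i j))).tendsto.comp hbase)
  have hPhiv : Phi m n A Ps ≤ v :=
    le_of_tendsto_of_tendsto' hPhiAs_tend hw fun s =>
      le_trans (weak_duality hm hn (As s) Ps (hAsnn s) hPsnn hPsrow hPscol) (hcap s)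
  linarith


/-- Orthogonal diagonalization of a real symmetric matrix. -/
lemma exists_orth_diag {N : ℕ} {X : Matrix (Fin N) (Fin N) ℝ} (hX : X.IsHermitian) :
    ∃ F : Matrix (Fin N) (Fin N) ℝ, Fᵀ * F = 1 ∧ F * Fᵀ = 1 ∧
      X = F * Matrix.diagonal hX.eigenvalues * Fᵀ := by
  set F : Matrix (Fin N) (Fin N) ℝ := (hX.eigenvectorUnitary : Matrix (Fin N) (Fin N) ℝ)
    with hFdef
  have hstar : star F = Fᵀ := by
    rw [Matrix.star_eq_conjTranspose, Matrix.conjTranspose_eq_transpose_of_trivial]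
  have h1 : F * star F = 1 := Matrix.mem_unitaryGroup_iff.mp hX.eigenvectorUnitary.2
  have h2 : star F * F = 1 := Matrix.mem_unitaryGroup_iff'.mp hX.eigenvectorUnitary.2
  have hdiag : Matrix.diagonal (RCLike.ofReal ∘ hX.eigenvalues)
      = Matrix.diagonal hX.eigenvalues := by
    rw [RCLike.ofReal_real_eq_id, Function.id_comp]
  refine ⟨F, by rw [← hstar]; exact h2, by rw [← hstar]; exact h1, ?_⟩
  have h3 := hX.spectral_theorem
  rw [Unitary.conjStarAlgAut_apply, hdiag] at h3
  rw [← hstar]; exact h3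

lemma diag_entry {a b : ℕ} (M : Matrix (Fin a) (Fin b) ℝ) (w : Fin b → ℝ) (i : Fin a) :
    (M * Matrix.diagonal w * Mᵀ) i i = ∑ j, (M i j)^2 * w j := by
  rw [Matrix.mul_apply]
  refine Finset.sum_congr rfl fun j _ => ?_
  rw [Matrix.mul_diagonal, Matrix.transpose_apply]
  ring

lemma delta_bound {N : ℕ} (C G : Matrix (Fin N) (Fin N) ℝ) (hC : Cᵀ = C)
    (hGGt : G * Gᵀ = 1) :
    ∑ i, ((Gᵀ * C * G) i i)^2 ≤ (C * C).trace := by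
  set D := Gᵀ * C * G with hDdef
  have hD : Dᵀ = D := by
    rw [hDdef, Matrix.transpose_mul, Matrix.transpose_mul, Matrix.transpose_transpose, hC,
      ← Matrix.mul_assoc]
  have hDD : D * D = Gᵀ * (C * (G * Gᵀ) * C) * G := by
    rw [hDdef]
    simp only [Matrix.mul_assoc]
  have htr : (D * D).trace = (C * C).trace := by
    rw [hDD, hGGt, Matrix.mul_one]
    rw [Matrix.trace_mul_cycle, hGGt, Matrix.one_mul]
  have hexpand : (D * D).trace = ∑ i, ∑ kk, (D i kk)^2 := by
    simp only [Matrix.trace, Matrix.diag, Matrix.mul_apply]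
    refine Finset.sum_congr rfl fun i _ => Finset.sum_congr rfl fun kk _ => ?_
    have hsym : D kk i = D i kk := by
      conv_lhs => rw [← hD]
      rfl
    rw [hsym]; ring
  have hdiag : ∑ i, (D i i)^2 ≤ ∑ i, ∑ kk, (D i kk)^2 := by
    refine Finset.sum_le_sum fun i _ => ?_
    exact Finset.single_le_sum (f := fun kk => (D i kk)^2)
      (fun kk _ => sq_nonneg _) (Finset.mem_univ i)
  calc ∑ i, (D i i)^2 ≤ ∑ i, ∑ kk, (D i kk)^2 := hdiag
    _ = (D * D).trace := hexpand.symm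
    _ = (C * C).trace := htr

lemma construct {k : ℕ} (hm : 0 < m) (hn : 0 < n) (U : Fin k → Matrix (Fin m) (Fin n) ℝ)
    (X : Matrix (Fin n) (Fin n) ℝ) (hX : X.PosDef) :
    ∃ A : Matrix (Fin m) (Fin n) ℝ,
      (∀ i j, 0 ≤ A i j) ∧
      matCap A ≤ (m : ℝ) * (∑ i, U i * X * (U i)ᵀ).det ^ ((1 : ℝ) / (m : ℝ)) /
        X.det ^ ((1 : ℝ) / (n : ℝ)) ∧
      matDelta A ≤ opDelta U ∧
      matSize A = opSize U ∧
      (∀ p : ℝ, (∑ i, U i * (U i)ᵀ) = p • (1 : Matrix (Fin m) (Fin m) ℝ) →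
          ∀ i, ∑ j, A i j = p) ∧
      (∀ q : ℝ, (∑ i, (U i)ᵀ * U i) = q • (1 : Matrix (Fin n) (Fin n) ℝ) →
          ∀ j, ∑ i, A i j = q) := by
  classical
  have hXt : Xᵀ = X := by
    have h := hX.1
    rwa [Matrix.IsHermitian, Matrix.conjTranspose_eq_transpose_of_trivial] at h
  set lam := hX.1.eigenvalues with hlamdef
  have hlam : ∀ j, 0 < lam j := fun j => hX.eigenvalues_pos j
  obtain ⟨F, hFtF, hFFt, hXdec⟩ := exists_orth_diag hX.1
  set B : Matrix (Fin m) (Fin m) ℝ := ∑ l, U l * X * (U l)ᵀ with hBdef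
  have hBsym : Bᵀ = B := by
    rw [hBdef, Matrix.transpose_sum]
    refine Finset.sum_congr rfl fun l _ => ?_
    rw [Matrix.transpose_mul, Matrix.transpose_mul, Matrix.transpose_transpose, hXt,
      ← Matrix.mul_assoc]
  have hB : B.IsHermitian := by
    rw [Matrix.IsHermitian, Matrix.conjTranspose_eq_transpose_of_trivial]
    exact hBsym
  set mu := hB.eigenvalues with hmudef
  obtain ⟨G, hGtG, hGGt, hBdec⟩ := exists_orth_diag hB
  set A : Matrix (Fin m) (Fin n) ℝ := Matrix.of fun i j => ∑ l, ((Gᵀ * U l * F) i j)^2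
    with hAdef
  have hAapp : ∀ i j, A i j = ∑ l, ((Gᵀ * U l * F) i j)^2 := fun i j => rfl
  have hAnn : ∀ i j, 0 ≤ A i j := fun i j => by
    rw [hAapp]; exact Finset.sum_nonneg fun l _ => sq_nonneg _
  have hVt : ∀ l, (Gᵀ * U l * F)ᵀ = Fᵀ * ((U l)ᵀ * G) := by
    intro l
    rw [Matrix.transpose_mul, Matrix.transpose_mul, Matrix.transpose_transpose]
  -- core row identity
  have hrowcore : ∀ (w : Fin n → ℝ) (i : Fin m), ∑ j, A i j * w j
      = (Gᵀ * (∑ l, U l * (F * Matrix.diagonal w * Fᵀ) * (U l)ᵀ) * G) i i := by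
    intro w i
    have hconj : Gᵀ * (∑ l, U l * (F * Matrix.diagonal w * Fᵀ) * (U l)ᵀ) * G
        = ∑ l, Gᵀ * (U l * (F * Matrix.diagonal w * Fᵀ) * (U l)ᵀ) * G := by
      rw [Matrix.mul_sum, Matrix.sum_mul]
    calc ∑ j, A i j * w j = ∑ j, ∑ l, ((Gᵀ * U l * F) i j)^2 * w j := by
          refine Finset.sum_congr rfl fun j _ => ?_
          rw [hAapp, Finset.sum_mul]
      _ = ∑ l, ∑ j, ((Gᵀ * U l * F) i j)^2 * w j := Finset.sum_comm
      _ = ∑ l, (Gᵀ * U l * F * Matrix.diagonal w * (Gᵀ * U l * F)ᵀ) i i :=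
          Finset.sum_congr rfl fun l _ => (diag_entry _ w i).symm
      _ = ∑ l, (Gᵀ * (U l * (F * Matrix.diagonal w * Fᵀ) * (U l)ᵀ) * G) i i := by
          refine Finset.sum_congr rfl fun l _ => ?_
          rw [hVt l]
          simp only [Matrix.mul_assoc]
      _ = (Gᵀ * (∑ l, U l * (F * Matrix.diagonal w * Fᵀ) * (U l)ᵀ) * G) i i := by
          rw [hconj, Matrix.sum_apply]
  -- core column identity
  have hcolcore : ∀ (w : Fin m → ℝ) (j : Fin n), ∑ i, A i j * w i
      = (Fᵀ * (∑ l, (U l)ᵀ * (G * Matrix.diagonal w * Gᵀ) * U l) * F) j j := by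
    intro w j
    have hconj : Fᵀ * (∑ l, (U l)ᵀ * (G * Matrix.diagonal w * Gᵀ) * U l) * F
        = ∑ l, Fᵀ * ((U l)ᵀ * (G * Matrix.diagonal w * Gᵀ) * U l) * F := by
      rw [Matrix.mul_sum, Matrix.sum_mul]
    calc ∑ i, A i j * w i = ∑ i, ∑ l, ((Fᵀ * ((U l)ᵀ * G)) j i)^2 * w i := by
          refine Finset.sum_congr rfl fun i _ => ?_
          rw [hAapp, Finset.sum_mul]
          refine Finset.sum_congr rfl fun l _ => ?_
          have : (Fᵀ * ((U l)ᵀ * G)) j i = (Gᵀ * U l * F) i j := by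
            rw [← hVt l, Matrix.transpose_apply]
          rw [this]
      _ = ∑ l, ∑ i, ((Fᵀ * ((U l)ᵀ * G)) j i)^2 * w i := Finset.sum_comm
      _ = ∑ l, (Fᵀ * ((U l)ᵀ * G) * Matrix.diagonal w * (Fᵀ * ((U l)ᵀ * G))ᵀ) j j :=
          Finset.sum_congr rfl fun l _ => (diag_entry _ w j).symm
      _ = ∑ l, (Fᵀ * ((U l)ᵀ * (G * Matrix.diagonal w * Gᵀ) * U l) * F) j j := by
          refine Finset.sum_congr rfl fun l _ => ?_
          have h1 : (Fᵀ * ((U l)ᵀ * G))ᵀ = Gᵀ * U l * F := by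
            rw [← hVt l, Matrix.transpose_transpose]
          rw [h1]
          simp only [Matrix.mul_assoc]
      _ = (Fᵀ * (∑ l, (U l)ᵀ * (G * Matrix.diagonal w * Gᵀ) * U l) * F) j j := by
          rw [hconj, Matrix.sum_apply]
  -- row sums
  set R : Matrix (Fin m) (Fin m) ℝ := ∑ l, U l * (U l)ᵀ with hRdef
  have hRsym : Rᵀ = R := by
    rw [hRdef, Matrix.transpose_sum]
    refine Finset.sum_congr rfl fun l _ => ?_
    rw [Matrix.transpose_mul, Matrix.transpose_transpose]
  have hdiag1F : F * Matrix.diagonal (fun _ : Fin n => (1:ℝ)) * Fᵀ = 1 := by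
    have h : Matrix.diagonal (fun _ : Fin n => (1:ℝ)) = (1 : Matrix (Fin n) (Fin n) ℝ) := by
      ext i j
      by_cases hij : i = j <;> simp [Matrix.diagonal, Matrix.one_apply, hij]
    rw [h, Matrix.mul_one, hFFt]
  have hdiag1G : G * Matrix.diagonal (fun _ : Fin m => (1:ℝ)) * Gᵀ = 1 := by
    have h : Matrix.diagonal (fun _ : Fin m => (1:ℝ)) = (1 : Matrix (Fin m) (Fin m) ℝ) := by
      ext i j
      by_cases hij : i = j <;> simp [Matrix.diagonal, Matrix.one_apply, hij]
    rw [h, Matrix.mul_one, hGGt]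
  have hrowsum : ∀ i, ∑ j, A i j = (Gᵀ * R * G) i i := by
    intro i
    have h1 : ∑ j, A i j = ∑ j, A i j * (fun _ : Fin n => (1:ℝ)) j := by
      simp
    rw [h1, hrowcore (fun _ => (1:ℝ)) i]
    have h2 : (∑ l, U l * (F * Matrix.diagonal (fun _ : Fin n => (1:ℝ)) * Fᵀ) * (U l)ᵀ) = R := by
      rw [hRdef]
      refine Finset.sum_congr rfl fun l _ => ?_
      rw [hdiag1F, Matrix.mul_one]
    rw [h2]
  set Cmat : Matrix (Fin n) (Fin n) ℝ := ∑ l, (U l)ᵀ * U l with hCmatdef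
  have hCsym : Cmatᵀ = Cmat := by
    rw [hCmatdef, Matrix.transpose_sum]
    refine Finset.sum_congr rfl fun l _ => ?_
    rw [Matrix.transpose_mul, Matrix.transpose_transpose]
  have hcolsum : ∀ j, ∑ i, A i j = (Fᵀ * Cmat * F) j j := by
    intro j
    have h1 : ∑ i, A i j = ∑ i, A i j * (fun _ : Fin m => (1:ℝ)) i := by
      simp
    rw [h1, hcolcore (fun _ => (1:ℝ)) j]
    have h2 : (∑ l, (U l)ᵀ * (G * Matrix.diagonal (fun _ : Fin m => (1:ℝ)) * Gᵀ) * U l) = Cmat := by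
      rw [hCmatdef]
      refine Finset.sum_congr rfl fun l _ => ?_
      rw [hdiag1G, Matrix.mul_one]
    rw [h2]
  -- size
  have htraceG : ∀ M : Matrix (Fin m) (Fin m) ℝ, (Gᵀ * M * G).trace = M.trace := by
    intro M
    rw [Matrix.trace_mul_cycle, hGGt, Matrix.one_mul]
  have htraceF : ∀ M : Matrix (Fin n) (Fin n) ℝ, (Fᵀ * M * F).trace = M.trace := by
    intro M
    rw [Matrix.trace_mul_cycle, hFFt, Matrix.one_mul]
  have hsize : matSize A = opSize U := by
    unfold matSize opSize
    calc ∑ i, ∑ j, A i j = ∑ i, (Gᵀ * R * G) i i :=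
          Finset.sum_congr rfl fun i _ => hrowsum i
      _ = (Gᵀ * R * G).trace := by rw [Matrix.trace]; rfl
      _ = R.trace := htraceG R
  -- capacity
  have hmulVec_lam : ∀ i, A.mulVec lam i = mu i := by
    intro i
    have h1 : A.mulVec lam i = ∑ j, A i j * lam j := by
      simp [Matrix.mulVec, dotProduct]
    rw [h1, hrowcore lam i]
    have h2 : F * Matrix.diagonal lam * Fᵀ = X := by rw [hXdec]
    rw [h2, ← hBdef]
    have h3 : Gᵀ * B * G = Matrix.diagonal mu := by
      rw [hBdec]
      calc Gᵀ * (G * Matrix.diagonal mu * Gᵀ) * G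
          = (Gᵀ * G) * Matrix.diagonal mu * (Gᵀ * G) := by
            simp only [Matrix.mul_assoc]
        _ = Matrix.diagonal mu := by rw [hGtG, Matrix.one_mul, Matrix.mul_one]
    rw [h3, Matrix.diagonal_apply_eq]
  have hdetB : B.det = ∏ i, mu i := by
    have h := hB.det_eq_prod_eigenvalues
    simpa using h
  have hdetX : X.det = ∏ j, lam j := by
    have h := hX.1.det_eq_prod_eigenvalues
    simpa using h
  have hcap : matCap A ≤ (m : ℝ) * (∑ i, U i * X * (U i)ᵀ).det ^ ((1 : ℝ) / (m : ℝ)) /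
      X.det ^ ((1 : ℝ) / (n : ℝ)) := by
    have h1 := matCap_le_fprod hm hAnn hlam
    have h2 : fprod m n A lam = (m : ℝ) * (∑ i, U i * X * (U i)ᵀ).det ^ ((1 : ℝ) / (m : ℝ)) /
        X.det ^ ((1 : ℝ) / (n : ℝ)) := by
      unfold fprod
      have h3 : (∏ i, A.mulVec lam i) = ∏ i, mu i :=
        Finset.prod_congr rfl fun i _ => hmulVec_lam i
      rw [← hBdef, hdetB, hdetX, h3]
    rw [← h2]
    exact h1
  -- delta
  have hdelta : matDelta A ≤ opDelta U := by
    unfold matDelta opDelta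
    rw [Fintype.card_fin, Fintype.card_fin, hsize]
    have hterm1 : ∑ i, (opSize U - (m:ℝ) * ∑ j, A i j) ^ 2
        ≤ ((opSize U • (1 : Matrix (Fin m) (Fin m) ℝ) - (m : ℝ) • R) ^ 2).trace := by
      set Cm : Matrix (Fin m) (Fin m) ℝ := opSize U • (1 : Matrix (Fin m) (Fin m) ℝ) - (m:ℝ) • R
        with hCmdef
      have hCmsym : Cmᵀ = Cm := by
        rw [hCmdef, Matrix.transpose_sub, Matrix.transpose_smul, Matrix.transpose_smul,
          Matrix.transpose_one, hRsym]
      have hentry : ∀ i, (Gᵀ * Cm * G) i i = opSize U - (m:ℝ) * ∑ j, A i j := by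
        intro i
        have h1 : Gᵀ * Cm * G = opSize U • (1 : Matrix (Fin m) (Fin m) ℝ) - (m:ℝ) • (Gᵀ * R * G) := by
          rw [hCmdef, Matrix.mul_sub, Matrix.sub_mul, Matrix.mul_smul, Matrix.smul_mul,
            Matrix.mul_smul, Matrix.smul_mul, Matrix.mul_one, hGtG]
        rw [h1]
        rw [Matrix.sub_apply, Matrix.smul_apply, Matrix.smul_apply, Matrix.one_apply_eq,
          hrowsum i]
        simp [smul_eq_mul]
      have h2 := delta_bound Cm G hCmsym hGGt
      rw [Finset.sum_congr rfl (fun i _ => by rw [← hentry i])]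
      rw [pow_two]
      exact h2
    have hterm2 : ∑ j, (opSize U - (n:ℝ) * ∑ i, A i j) ^ 2
        ≤ ((opSize U • (1 : Matrix (Fin n) (Fin n) ℝ) - (n : ℝ) • Cmat) ^ 2).trace := by
      set Cn : Matrix (Fin n) (Fin n) ℝ := opSize U • (1 : Matrix (Fin n) (Fin n) ℝ) - (n:ℝ) • Cmat
        with hCndef
      have hCnsym : Cnᵀ = Cn := by
        rw [hCndef, Matrix.transpose_sub, Matrix.transpose_smul, Matrix.transpose_smul,
          Matrix.transpose_one, hCsym]
      have hentry : ∀ j, (Fᵀ * Cn * F) j j = opSize U - (n:ℝ) * ∑ i, A i j := by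
        intro j
        have h1 : Fᵀ * Cn * F = opSize U • (1 : Matrix (Fin n) (Fin n) ℝ) - (n:ℝ) • (Fᵀ * Cmat * F) := by
          rw [hCndef, Matrix.mul_sub, Matrix.sub_mul, Matrix.mul_smul, Matrix.smul_mul,
            Matrix.mul_smul, Matrix.smul_mul, Matrix.mul_one, hFtF]
        rw [h1]
        rw [Matrix.sub_apply, Matrix.smul_apply, Matrix.smul_apply, Matrix.one_apply_eq,
          hcolsum j]
        simp [smul_eq_mul]
      have h2 := delta_bound Cn F hCnsym hFFt
      rw [Finset.sum_congr rfl (fun j _ => by rw [← hentry j])]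
      rw [pow_two]
      exact h2
    have hmnn : (0:ℝ) ≤ 1/(m:ℝ) := by positivity
    have hnnn : (0:ℝ) ≤ 1/(n:ℝ) := by positivity
    exact add_le_add (mul_le_mul_of_nonneg_left hterm1 hmnn)
      (mul_le_mul_of_nonneg_left hterm2 hnnn)
  -- conditional row sums
  have hrowp : ∀ p : ℝ, (∑ l, U l * (U l)ᵀ) = p • (1 : Matrix (Fin m) (Fin m) ℝ) →
      ∀ i, ∑ j, A i j = p := by
    intro p hp i
    rw [hrowsum i]
    have hR1 : R = p • (1 : Matrix (Fin m) (Fin m) ℝ) := by rw [hRdef]; exact hp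
    rw [hR1, Matrix.mul_smul, Matrix.smul_mul, Matrix.mul_one, hGtG]
    rw [Matrix.smul_apply, Matrix.one_apply_eq, smul_eq_mul, mul_one]
  have hcolq : ∀ q : ℝ, (∑ l, (U l)ᵀ * U l) = q • (1 : Matrix (Fin n) (Fin n) ℝ) →
      ∀ j, ∑ i, A i j = q := by
    intro q hq j
    rw [hcolsum j]
    have hC1 : Cmat = q • (1 : Matrix (Fin n) (Fin n) ℝ) := by rw [hCmatdef]; exact hq
    rw [hC1, Matrix.mul_smul, Matrix.smul_mul, Matrix.mul_one, hFtF]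
    rw [Matrix.smul_apply, Matrix.one_apply_eq, smul_eq_mul, mul_one]
  exact ⟨A, hAnn, hcap, hdelta, hsize, hrowp, hcolq⟩


end CapRed

set_option maxHeartbeats 1000000 in
theorem exists_matrix_reduction {k m n : ℕ} (hm : 0 < m) (hn : 0 < n)
    (U : Fin k → Matrix (Fin m) (Fin n) ℝ) :
    ∃ A : Matrix (Fin m) (Fin n) ℝ,
      (∀ i j, 0 ≤ A i j) ∧
      matCap A ≤ opCap U ∧
      matDelta A ≤ opDelta U ∧
      matSize A = opSize U ∧
      (∀ p : ℝ, 0 ≤ p → (∑ i, U i * (U i)ᵀ) = p • (1 : Matrix (Fin m) (Fin m) ℝ) →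
          ∀ i, ∑ j, A i j = p) ∧
      (∀ q : ℝ, 0 ≤ q → (∑ i, (U i)ᵀ * U i) = q • (1 : Matrix (Fin n) (Fin n) ℝ) →
          ∀ j, ∑ i, A i j = q) := by
  classical
  open CapRed Filter in
  set SU := {c : ℝ | ∃ X : Matrix (Fin n) (Fin n) ℝ, X.PosDef ∧
    c = (m : ℝ) * (∑ i, U i * X * (U i)ᵀ).det ^ ((1 : ℝ) / (m : ℝ)) /
        X.det ^ ((1 : ℝ) / (n : ℝ))} with hSUdef
  have hopCap : opCap U = sInf SU := rfl
  have hSUne : SU.Nonempty := ⟨_, 1, Matrix.PosDef.one, rfl⟩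
  have hSUnn : ∀ c ∈ SU, 0 ≤ c := by
    rintro c ⟨X, hX, rfl⟩
    have hpsd : (∑ i, U i * X * (U i)ᵀ).PosSemidef := by
      apply Finset.sum_induction _ _ (fun a b ha hb => ha.add hb) Matrix.PosSemidef.zero
      intro i _
      have h := hX.posSemidef.mul_mul_conjTranspose_same (U i)
      rwa [Matrix.conjTranspose_eq_transpose_of_trivial] at h
    have hdet : 0 ≤ (∑ i, U i * X * (U i)ᵀ).det := by
      have h1 : (∑ i, U i * X * (U i)ᵀ).det = ∏ i, hpsd.1.eigenvalues i := by
        have h := hpsd.1.det_eq_prod_eigenvalues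
        simpa using h
      rw [h1]
      exact Finset.prod_nonneg fun i _ => hpsd.eigenvalues_nonneg i
    have hdX : 0 ≤ X.det := hX.det_pos.le
    exact div_nonneg (mul_nonneg (Nat.cast_nonneg m) (Real.rpow_nonneg hdet _))
      (Real.rpow_nonneg hdX _)
  have hv0 : 0 ≤ opCap U := by
    rw [hopCap]
    exact Real.sInf_nonneg hSUnn
  have happrox : ∀ s : ℕ, ∃ X : Matrix (Fin n) (Fin n) ℝ, X.PosDef ∧
      (m : ℝ) * (∑ i, U i * X * (U i)ᵀ).det ^ ((1 : ℝ) / (m : ℝ)) /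
        X.det ^ ((1 : ℝ) / (n : ℝ)) < opCap U + 1/((s:ℝ)+1) := by
    intro s
    have hpos : (0:ℝ) < 1/((s:ℝ)+1) := by positivity
    have h1 : sInf SU < opCap U + 1/((s:ℝ)+1) := by
      rw [← hopCap]; linarith
    obtain ⟨c, hc, hlt⟩ := exists_lt_of_csInf_lt hSUne h1
    obtain ⟨X, hX, rfl⟩ := hc
    exact ⟨X, hX, hlt⟩
  choose Xs hXs hval using happrox
  have hcon := fun s => CapRed.construct hm hn U (Xs s) (hXs s)
  choose As hAnn hAcap hAdelta hAsize hArow hAcol using hcon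
  -- entries are bounded
  have hAbound : ∀ s i j, As s i j ≤ opSize U := by
    intro s i j
    have h1 : As s i j ≤ ∑ j', As s i j' :=
      Finset.single_le_sum (f := fun j' => As s i j') (fun j' _ => hAnn s i j')
        (Finset.mem_univ j)
    have h2 : ∑ j', As s i j' ≤ ∑ i', ∑ j', As s i' j' :=
      Finset.single_le_sum (f := fun i' => ∑ j', As s i' j')
        (fun i' _ => Finset.sum_nonneg fun j' _ => hAnn s i' j') (Finset.mem_univ i)
    have h3 : ∑ i', ∑ j', As s i' j' = opSize U := hAsize s
    linarith
  have hmem : ∀ s, (fun i j => As s i j)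
      ∈ Set.Icc (0 : Fin m → Fin n → ℝ) (fun _ _ => opSize U) := by
    intro s
    simp only [Set.mem_Icc, Pi.le_def]
    exact ⟨fun i j => by simpa using hAnn s i j, fun i j => hAbound s i j⟩
  obtain ⟨Al, hAlmem, φ, hφmono, hφtend⟩ := isCompact_Icc.tendsto_subseq hmem
  set Ao : Matrix (Fin m) (Fin n) ℝ := Matrix.of Al with hAodef
  have hent : ∀ i j, Filter.Tendsto (fun s => As (φ s) i j) Filter.atTop (nhds (Ao i j)) :=
    fun i j => tendsto_pi_nhds.mp (tendsto_pi_nhds.mp hφtend i) j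
  have hAonn : ∀ i j, 0 ≤ Ao i j := by
    intro i j
    have h1 := hAlmem.1
    rw [Pi.le_def] at h1
    have h2 := h1 i
    rw [Pi.le_def] at h2
    exact h2 j
  -- row and column sums converge
  have hrow_tend : ∀ i, Filter.Tendsto (fun s => ∑ j, As (φ s) i j)
      Filter.atTop (nhds (∑ j, Ao i j)) :=
    fun i => tendsto_finset_sum _ fun j _ => hent i j
  have hcol_tend : ∀ j, Filter.Tendsto (fun s => ∑ i, As (φ s) i j)
      Filter.atTop (nhds (∑ i, Ao i j)) :=
    fun j => tendsto_finset_sum _ fun i _ => hent i j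
  have hsize_tend : Filter.Tendsto (fun s => matSize (As (φ s)))
      Filter.atTop (nhds (matSize Ao)) := by
    unfold matSize
    exact tendsto_finset_sum _ fun i _ => hrow_tend i
  have hsize : matSize Ao = opSize U := by
    have h1 : (fun s => matSize (As (φ s))) = fun _ => opSize U :=
      funext fun s => hAsize (φ s)
    rw [h1] at hsize_tend
    exact (tendsto_nhds_unique hsize_tend tendsto_const_nhds)
  have hdelta_tend : Filter.Tendsto (fun s => matDelta (As (φ s)))
      Filter.atTop (nhds (matDelta Ao)) := by
    unfold matDelta
    apply Filter.Tendsto.add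
    · apply Filter.Tendsto.const_mul
      apply tendsto_finset_sum
      intro i _
      exact (hsize_tend.sub ((hrow_tend i).const_mul _)).pow 2
    · apply Filter.Tendsto.const_mul
      apply tendsto_finset_sum
      intro j _
      exact (hsize_tend.sub ((hcol_tend j).const_mul _)).pow 2
  have hdelta : matDelta Ao ≤ opDelta U :=
    le_of_tendsto hdelta_tend (Filter.Eventually.of_forall fun s => hAdelta (φ s))
  -- capacity
  have hwtend : Filter.Tendsto (fun s : ℕ => opCap U + 1/((φ s : ℝ)+1))
      Filter.atTop (nhds (opCap U)) := by
    have h1 : Filter.Tendsto (fun s : ℕ => 1/((φ s : ℝ)+1)) Filter.atTop (nhds 0) := by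
      apply squeeze_zero (fun s => by positivity) (g := fun s : ℕ => 1/((s:ℝ)+1))
      · intro s
        apply one_div_le_one_div_of_le (by positivity)
        have hnat : s ≤ φ s := hφmono.le_apply
        have hreal : ((s:ℝ)) ≤ ((φ s : ℝ)) := by exact_mod_cast hnat
        linarith
      · exact tendsto_one_div_add_atTop_nhds_zero_nat
    have h2 := h1.const_add (opCap U)
    rwa [add_zero] at h2
  have hcap : matCap Ao ≤ opCap U := by
    apply CapRed.cap_le_of_tendsto hm hn Ao (fun s => As (φ s))
      (fun s i j => hAnn (φ s) i j) hAonn hent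
      (fun s : ℕ => opCap U + 1/((φ s : ℝ)+1)) (opCap U) hv0 hwtend
    intro s
    exact le_of_lt (lt_of_le_of_lt (hAcap (φ s)) (hval (φ s)))
  refine ⟨Ao, hAonn, hcap, hdelta, hsize, ?_, ?_⟩
  · intro p _ hp i
    have h1 : (fun s => ∑ j, As (φ s) i j) = fun _ => p :=
      funext fun s => hArow (φ s) p hp i
    have h2 := hrow_tend i
    rw [h1] at h2
    exact tendsto_nhds_unique h2 tendsto_const_nhds
  · intro q _ hq j
    have h1 : (fun s => ∑ i, As (φ s) i j) = fun _ => q :=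
      funext fun s => hAcol (φ s) q hq j
    have h2 := hcol_tend j
    rw [h1] at h2
    exact tendsto_nhds_unique h2 tendsto_const_nhds
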